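/- (Variance of the deformed $q$-binomial variable) Let $0<q<1$, $\theta>0$, $n\ge 2$, and let $X$ follow the $q$-binomial distribution of the first kind with probability function $f_X^B(x)=\binom{n}{x}_q q^{\binom{x}{2}}\theta^x \prod_{j=1}^{n}(1+\theta q^{j-1})^{-1}$, $x=0,1,\ldots,n$. Then the variance of the deformed random variable $[X]_{1/q}$ is $V\big([X]_{1/q}\big)=\sum_{x=0}^{n}\big([x]_{1/q}-\mu\big)^2 f_X^B(x) = \frac{1-q}{q}\,[n]_q^2\,\frac{\theta^2}{(1+\theta q^{n-1})^2(1+\theta q^{n-2})} + [n]_q\,\frac{\theta}{(1+\theta q^{n-1})(1+\theta q^{n-2})}$, where $\mu=[n]_q\,\theta/(1+\theta q^{n-1})$. -/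

import Mathlib

open scoped BigOperators

/-- The `q`-factorial `[n]_q! = ∏_{k=1}^n (1-q^k)/(1-q)`. -/
noncomputable def qFact (q : ℝ) (n : ℕ) : ℝ :=
  ∏ k ∈ Finset.range n, (1 - q ^ (k + 1)) / (1 - q)

/-- The `q`-binomial coefficient. -/
noncomputable def qBinom (q : ℝ) (n x : ℕ) : ℝ :=
  qFact q n / (qFact q x * qFact q (n - x))

/-- The `q`-number `[n]_q = (1-q^n)/(1-q)`. -/
noncomputable def qNat (q : ℝ) (n : ℕ) : ℝ := (1 - q ^ n) / (1 - q)

/-- The deformed value `[x]_{1/q} = (q^{-x}-1)/(q^{-1}-1)`. -/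
noncomputable def qDef (q : ℝ) (x : ℕ) : ℝ := (q⁻¹ ^ x - 1) / (q⁻¹ - 1)

lemma qpow_lt_one {q : ℝ} (hq0 : 0 < q) (hq1 : q < 1) (k : ℕ) : q ^ (k+1) < 1 :=
  pow_lt_one₀ hq0.le hq1 (Nat.succ_ne_zero k)

lemma qFact_pos {q : ℝ} (hq0 : 0 < q) (hq1 : q < 1) (n : ℕ) : 0 < qFact q n := by
  apply Finset.prod_pos
  intro k _
  have h2 := qpow_lt_one hq0 hq1 k
  have h3 : (0:ℝ) < 1 - q ^ (k+1) := by linarith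
  have h1 : (0:ℝ) < 1 - q := by linarith
  positivity

lemma qFact_succ {q : ℝ} (n : ℕ) : qFact q (n+1) = qFact q n * ((1 - q ^ (n+1)) / (1 - q)) :=
  Finset.prod_range_succ _ n

lemma qFact_zero {q : ℝ} : qFact q 0 = 1 := rfl

lemma qBinom_zero {q : ℝ} (hq0 : 0 < q) (hq1 : q < 1) (n : ℕ) : qBinom q n 0 = 1 := by
  simp [qBinom, qFact_zero]
  exact (qFact_pos hq0 hq1 n).ne'

lemma qBinom_self {q : ℝ} (hq0 : 0 < q) (hq1 : q < 1) (n : ℕ) : qBinom q n n = 1 := by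
  simp [qBinom, qFact_zero]
  exact (qFact_pos hq0 hq1 n).ne'

lemma qBinom_pascal {q : ℝ} (hq0 : 0 < q) (hq1 : q < 1) {n x : ℕ} (hx : x < n) :
    qBinom q (n+1) (x+1) = qBinom q n (x+1) + q ^ (n-x) * qBinom q n x := by
  obtain ⟨m, rfl⟩ : ∃ m, n = x + 1 + m := ⟨n - (x+1), by omega⟩
  have e1 : x + 1 + m + 1 - (x + 1) = m + 1 := by omega
  have e2 : x + 1 + m - (x + 1) = m := by omega
  have e3 : x + 1 + m - x = m + 1 := by omega
  unfold qBinom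
  rw [e1, e2, e3]
  rw [show x + 1 + m + 1 = (x + 1 + m) + 1 from rfl, qFact_succ,
    show qFact q (x+1) = qFact q x * ((1 - q^(x+1))/(1-q)) from qFact_succ x,
    qFact_succ m]
  have h1 : (1:ℝ) - q ≠ 0 := by linarith
  have h2 : qFact q x ≠ 0 := (qFact_pos hq0 hq1 x).ne'
  have h3 : qFact q m ≠ 0 := (qFact_pos hq0 hq1 m).ne'
  have h5 : (1:ℝ) - q^(x+1) ≠ 0 := by have := qpow_lt_one hq0 hq1 x; linarith
  have h6 : (1:ℝ) - q^(m+1) ≠ 0 := by have := qpow_lt_one hq0 hq1 m; linarith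
  field_simp
  ring

lemma tri_succ (x : ℕ) : (x+1) * ((x+1)-1) / 2 = x*(x-1)/2 + x := by
  have h : (x+1) * ((x+1)-1) = x*(x-1) + 2*x := by
    cases x with
    | zero => rfl
    | succ y => simp [Nat.succ_sub_one]; ring
  rw [h, Nat.add_mul_div_left _ _ (by norm_num : 0 < 2)]

lemma qbinom_gen_thm {q : ℝ} (hq0 : 0 < q) (hq1 : q < 1) (n : ℕ) (θ : ℝ) :
    ∑ x ∈ Finset.range (n+1), qBinom q n x * q ^ (x*(x-1)/2) * θ ^ x =
      ∏ j ∈ Finset.range n, (1 + θ * q ^ j) := by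
  induction n generalizing θ with
  | zero => simp [qBinom_zero hq0 hq1]
  | succ n ih =>
    rw [Finset.sum_range_succ' (fun x => qBinom q (n+1) x * q ^ (x*(x-1)/2) * θ ^ x)]
    rw [Finset.sum_range_succ (fun x => qBinom q (n+1) (x+1) * q ^ ((x+1)*((x+1)-1)/2) * θ ^ (x+1))]
    have key : ∀ x ∈ Finset.range n,
        qBinom q (n+1) (x+1) * q ^ ((x+1)*((x+1)-1)/2) * θ ^ (x+1) =
        qBinom q n (x+1) * q ^ ((x+1)*((x+1)-1)/2) * θ ^ (x+1)
          + q ^ n * (qBinom q n x * q ^ (x*(x-1)/2) * θ ^ x) * θ := by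
      intro x hx
      rw [Finset.mem_range] at hx
      rw [qBinom_pascal hq0 hq1 hx, tri_succ, pow_add q (x*(x-1)/2) x]
      have hp : q^(n-x) * (q^(x*(x-1)/2) * q^x) = q^n * q^(x*(x-1)/2) := by
        rw [← pow_add, ← pow_add]
        have h : n-x+(x*(x-1)/2+x) = n + x*(x-1)/2 := by
          set c := x*(x-1)/2; omega
        rw [h, pow_add]
      linear_combination (θ^(x+1) * qBinom q n x) * hp
    rw [Finset.sum_congr rfl key, Finset.sum_add_distrib]
    have hlast : qBinom q (n+1) (n+1) * q ^ ((n+1)*((n+1)-1)/2) * θ ^ (n+1)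
        = q ^ n * (qBinom q n n * q ^ (n*(n-1)/2) * θ ^ n) * θ := by
      rw [qBinom_self hq0 hq1, qBinom_self hq0 hq1, tri_succ, pow_add, pow_succ]
      ring
    rw [hlast]
    have hsum2 : ∑ x ∈ Finset.range n, q ^ n * (qBinom q n x * q ^ (x*(x-1)/2) * θ ^ x) * θ
          + q ^ n * (qBinom q n n * q ^ (n*(n-1)/2) * θ ^ n) * θ
        = q ^ n * θ * ∑ x ∈ Finset.range (n+1), qBinom q n x * q ^ (x*(x-1)/2) * θ ^ x := by
      rw [Finset.sum_range_succ, mul_add, Finset.mul_sum]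
      congr 1
      · exact Finset.sum_congr rfl fun x _ => by ring
      · ring
    have hsum1 : ∑ x ∈ Finset.range n, qBinom q n (x+1) * q ^ ((x+1)*((x+1)-1)/2) * θ ^ (x+1)
          + qBinom q (n+1) 0 * q ^ (0*(0-1)/2) * θ ^ 0
        = ∑ x ∈ Finset.range (n+1), qBinom q n x * q ^ (x*(x-1)/2) * θ ^ x := by
      rw [Finset.sum_range_succ' (fun x => qBinom q n x * q ^ (x*(x-1)/2) * θ ^ x)]
      simp [qBinom_zero hq0 hq1]
    calc ∑ x ∈ Finset.range n, qBinom q n (x+1) * q ^ ((x+1)*((x+1)-1)/2) * θ ^ (x+1)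
          + ∑ x ∈ Finset.range n, q ^ n * (qBinom q n x * q ^ (x*(x-1)/2) * θ ^ x) * θ
          + q ^ n * (qBinom q n n * q ^ (n*(n-1)/2) * θ ^ n) * θ
          + qBinom q (n+1) 0 * q ^ (0*(0-1)/2) * θ ^ 0
        = (∑ x ∈ Finset.range n, qBinom q n (x+1) * q ^ ((x+1)*((x+1)-1)/2) * θ ^ (x+1)
            + qBinom q (n+1) 0 * q ^ (0*(0-1)/2) * θ ^ 0)
          + (∑ x ∈ Finset.range n, q ^ n * (qBinom q n x * q ^ (x*(x-1)/2) * θ ^ x) * θ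
            + q ^ n * (qBinom q n n * q ^ (n*(n-1)/2) * θ ^ n) * θ) := by ring
      _ = (∏ j ∈ Finset.range n, (1 + θ * q ^ j)) + q ^ n * θ * ∏ j ∈ Finset.range n, (1 + θ * q ^ j) := by
          rw [hsum1, hsum2, ih]
      _ = ∏ j ∈ Finset.range (n+1), (1 + θ * q ^ j) := by
          rw [Finset.prod_range_succ]; ring

lemma qDef_zero {q : ℝ} : qDef q 0 = 0 := by simp [qDef]

lemma qDef_succ_eq {q : ℝ} (hq0 : 0 < q) (hq1 : q < 1) (y : ℕ) :
    qDef q (y+1) = (1 - q^(y+1)) / ((1-q) * q^y) := by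
  unfold qDef
  have hq : q ≠ 0 := hq0.ne'
  have h1 : (1:ℝ) - q ≠ 0 := by linarith
  have hy : q ^ y ≠ 0 := pow_ne_zero _ hq
  have hy1 : q ^ (y+1) ≠ 0 := pow_ne_zero _ hq
  rw [inv_pow]
  field_simp
  ring

lemma geom_step (r : ℝ) (h : r - 1 ≠ 0) (y : ℕ) :
    (r^(y+1) - 1)/(r-1) = r * ((r^y - 1)/(r-1)) + 1 := by
  field_simp
  ring

lemma qDef_succ {q : ℝ} (hq0 : 0 < q) (hq1 : q < 1) (y : ℕ) :
    qDef q (y+1) = q⁻¹ * qDef q y + 1 := by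
  have h1 : q⁻¹ - 1 ≠ 0 := by
    have h2 : 1 < q⁻¹ := (one_lt_inv₀ hq0).mpr hq1
    linarith
  unfold qDef
  exact geom_step _ h1 y

lemma absorb {q : ℝ} (hq0 : 0 < q) (hq1 : q < 1) {m y : ℕ} (h : y ≤ m) :
    qDef q (y+1) * qBinom q (m+1) (y+1) * q ^ y = qNat q (m+1) * qBinom q m y := by
  unfold qBinom qNat
  have e1 : m + 1 - (y + 1) = m - y := by omega
  rw [e1, qDef_succ_eq hq0 hq1,
    show qFact q (y+1) = qFact q y * ((1 - q^(y+1))/(1-q)) from qFact_succ y,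
    qFact_succ m]
  have hq : q ≠ 0 := hq0.ne'
  have h1 : (1:ℝ) - q ≠ 0 := by linarith
  have h2 : qFact q y ≠ 0 := (qFact_pos hq0 hq1 y).ne'
  have h3 : qFact q (m-y) ≠ 0 := (qFact_pos hq0 hq1 _).ne'
  have h5 : (1:ℝ) - q^(y+1) ≠ 0 := by have := qpow_lt_one hq0 hq1 y; linarith
  have hy : q ^ y ≠ 0 := pow_ne_zero _ hq
  field_simp

lemma moment1 {q : ℝ} (hq0 : 0 < q) (hq1 : q < 1) (m : ℕ) (θ : ℝ) :
    ∑ x ∈ Finset.range (m+2), qDef q x * (qBinom q (m+1) x * q ^ (x*(x-1)/2) * θ ^ x)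
      = qNat q (m+1) * θ * ∏ j ∈ Finset.range m, (1 + θ * q ^ j) := by
  rw [Finset.sum_range_succ' (fun x => qDef q x * (qBinom q (m+1) x * q ^ (x*(x-1)/2) * θ ^ x))]
  have key : ∀ y ∈ Finset.range (m+1),
      qDef q (y+1) * (qBinom q (m+1) (y+1) * q ^ ((y+1)*((y+1)-1)/2) * θ ^ (y+1))
      = qNat q (m+1) * θ * (qBinom q m y * q ^ (y*(y-1)/2) * θ ^ y) := by
    intro y hy
    rw [Finset.mem_range] at hy
    rw [tri_succ, pow_add]
    have ha := absorb hq0 hq1 (show y ≤ m by omega)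
    linear_combination (q ^ (y*(y-1)/2) * θ ^ (y+1)) * ha
  rw [Finset.sum_congr rfl key, qDef_zero, ← Finset.mul_sum,
    qbinom_gen_thm hq0 hq1 m θ]
  ring

lemma moment2 {q : ℝ} (hq0 : 0 < q) (hq1 : q < 1) (k : ℕ) (θ : ℝ) :
    ∑ x ∈ Finset.range (k+3), qDef q x ^ 2 * (qBinom q (k+2) x * q ^ (x*(x-1)/2) * θ ^ x)
      = qNat q (k+2) * θ *
          (q⁻¹ * (qNat q (k+1) * θ * ∏ j ∈ Finset.range k, (1 + θ * q ^ j))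
            + ∏ j ∈ Finset.range (k+1), (1 + θ * q ^ j)) := by
  rw [Finset.sum_range_succ' (fun x => qDef q x ^ 2 * (qBinom q (k+2) x * q ^ (x*(x-1)/2) * θ ^ x))]
  have key : ∀ y ∈ Finset.range (k+2),
      qDef q (y+1) ^ 2 * (qBinom q (k+2) (y+1) * q ^ ((y+1)*((y+1)-1)/2) * θ ^ (y+1))
      = qNat q (k+2) * θ * (q⁻¹ * (qDef q y * (qBinom q (k+1) y * q ^ (y*(y-1)/2) * θ ^ y))
          + qBinom q (k+1) y * q ^ (y*(y-1)/2) * θ ^ y) := by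
    intro y hy
    rw [Finset.mem_range] at hy
    rw [tri_succ, pow_add]
    have ha := absorb hq0 hq1 (show y ≤ k+1 by omega)
    have hs := qDef_succ hq0 hq1 y
    calc qDef q (y+1) ^ 2 * (qBinom q (k+2) (y+1) * (q ^ (y*(y-1)/2) * q ^ y) * θ ^ (y+1))
        = (qDef q (y+1) * qBinom q ((k+1)+1) (y+1) * q ^ y)
            * (qDef q (y+1) * (q ^ (y*(y-1)/2) * θ ^ (y+1))) := by ring
      _ = (qNat q (k+2) * qBinom q (k+1) y)
            * ((q⁻¹ * qDef q y + 1) * (q ^ (y*(y-1)/2) * θ ^ (y+1))) := by rw [ha, ← hs]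
      _ = qNat q (k+2) * θ * (q⁻¹ * (qDef q y * (qBinom q (k+1) y * q ^ (y*(y-1)/2) * θ ^ y))
            + qBinom q (k+1) y * q ^ (y*(y-1)/2) * θ ^ y) := by ring
  rw [Finset.sum_congr rfl key, qDef_zero, ← Finset.mul_sum, Finset.sum_add_distrib,
    ← Finset.mul_sum, moment1 hq0 hq1 k θ, qbinom_gen_thm hq0 hq1 (k+1) θ]
  ring

/-- **Variance of the deformed q-binomial variable**:
`V([X]_{1/q}) = (1-q)/q · [n]_q² θ²/((1+θq^{n-1})²(1+θq^{n-2}))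
  + [n]_q θ/((1+θq^{n-1})(1+θq^{n-2}))`. -/
theorem qBinomial_deformed_variance (q θ : ℝ) (hq0 : 0 < q) (hq1 : q < 1) (hθ : 0 < θ)
    (n : ℕ) (hn : 2 ≤ n) :
    ∑ x ∈ Finset.range (n + 1),
      (qDef q x - qNat q n * (θ / (1 + θ * q ^ ((n : ℤ) - 1)))) ^ 2 *
        (qBinom q n x * q ^ (x * (x - 1) / 2) * θ ^ x /
          ∏ j ∈ Finset.range n, (1 + θ * q ^ j)) =
      (1 - q) / q * qNat q n ^ 2 *
          (θ ^ 2 / ((1 + θ * q ^ ((n : ℤ) - 1)) ^ 2 * (1 + θ * q ^ ((n : ℤ) - 2)))) +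
        qNat q n * (θ / ((1 + θ * q ^ ((n : ℤ) - 1)) * (1 + θ * q ^ ((n : ℤ) - 2)))) := by
  obtain ⟨k, rfl⟩ : ∃ k, n = k + 2 := ⟨n - 2, by omega⟩
  have hz1 : q ^ (((k+2 : ℕ) : ℤ) - 1) = q ^ (k+1) := by
    rw [show ((k+2:ℕ):ℤ) - 1 = ((k+1:ℕ):ℤ) by push_cast; ring, zpow_natCast]
  have hz2 : q ^ (((k+2 : ℕ) : ℤ) - 2) = q ^ k := by
    rw [show ((k+2:ℕ):ℤ) - 2 = ((k:ℕ):ℤ) by push_cast; ring, zpow_natCast]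
  rw [hz1, hz2]
  have hq : (q:ℝ) ≠ 0 := hq0.ne'
  have h1q : (1:ℝ) - q ≠ 0 := by linarith
  have hA : (0:ℝ) < 1 + θ * q ^ k := by positivity
  have hB : (0:ℝ) < 1 + θ * q ^ (k+1) := by positivity
  have hPk : (0:ℝ) < ∏ j ∈ Finset.range k, (1 + θ * q ^ j) := by
    apply Finset.prod_pos; intro j _; positivity
  set μ : ℝ := qNat q (k+2) * (θ / (1 + θ * q ^ (k+1))) with hμ
  set T : ℕ → ℝ := fun x => qBinom q (k+2) x * q ^ (x*(x-1)/2) * θ ^ x with hT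
  have step1 : ∀ x ∈ Finset.range (k+2+1),
      (qDef q x - μ) ^ 2 * (T x / ∏ j ∈ Finset.range (k+2), (1 + θ * q ^ j))
      = ((qDef q x - μ) ^ 2 * T x) / ∏ j ∈ Finset.range (k+2), (1 + θ * q ^ j) :=
    fun x _ => by ring
  rw [Finset.sum_congr rfl step1, ← Finset.sum_div]
  have step2 : ∀ x ∈ Finset.range (k+2+1),
      (qDef q x - μ) ^ 2 * T x
      = qDef q x ^ 2 * T x + μ^2 * T x - 2*μ*(qDef q x * T x) :=
    fun x _ => by ring
  rw [Finset.sum_congr rfl step2, Finset.sum_sub_distrib, Finset.sum_add_distrib,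
    ← Finset.mul_sum, ← Finset.mul_sum]
  have hM2 := moment2 hq0 hq1 k θ
  have hM1 := moment1 hq0 hq1 (k+1) θ
  have hM0 := qbinom_gen_thm hq0 hq1 (k+2) θ
  rw [show (k+2+1) = k+3 from rfl] at *
  rw [hT]
  simp only []
  rw [hM2, hM1, hM0]
  rw [Finset.prod_range_succ (fun j => 1 + θ * q ^ j) (k+1),
    Finset.prod_range_succ (fun j => 1 + θ * q ^ j) k]
  rw [hμ]
  unfold qNat
  have hAne : (1:ℝ) + θ * q ^ k ≠ 0 := hA.ne'
  have hBne : (1:ℝ) + θ * q ^ (k+1) ≠ 0 := hB.ne'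
  have hPkne : (∏ j ∈ Finset.range k, (1 + θ * q ^ j)) ≠ 0 := hPk.ne'
  field_simp
  ring
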